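/- Let k be an even natural number with k ≥ 4, and let p ≥ k+2, q ≥ k+1, n ≥ 1. If there exists a (p-1, q; k)-coloring of Fin n, then there exists a (p, q; k)-coloring of Fin (2*n). (This is the transfer form of the recurrence r_k(p,q) ≥ 2·(r_k(p-1,q) − 1) + 1 for even k ≥ 4.) -/

import Mathlib

/-- An `(a, b; k)`-coloring of `Fin n`: a 2-coloring of the `k`-subsets
(`true` = red, `false` = blue) such that every `a`-subset contains a blue
`k`-subset and every `b`-subset contains a red `k`-subset. -/
def IsColoring (a b k n : ℕ) (χ : Finset (Fin n) → Bool) : Prop :=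
  (∀ S : Finset (Fin n), S.card = a → ∃ e ⊆ S, e.card = k ∧ χ e = false) ∧
  (∀ S : Finset (Fin n), S.card = b → ∃ e ⊆ S, e.card = k ∧ χ e = true)

open Finset
section Aux
variable {n : ℕ}

def pr (hn : 0 < n) (x : Fin (2 * n)) : Fin n := ⟨x.val % n, Nat.mod_lt _ hn⟩
def lo (v : Fin n) : Fin (2 * n) := ⟨v.val, by omega⟩
def hi (v : Fin n) : Fin (2 * n) := ⟨v.val + n, by omega⟩

variable (hn : 0 < n)

lemma pr_lo (v : Fin n) : pr hn (lo v) = v := by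
  simp [pr, lo, Nat.mod_eq_of_lt v.isLt]
lemma pr_hi (v : Fin n) : pr hn (hi v) = v := by
  simp [pr, hi, Nat.mod_eq_of_lt v.isLt]
lemma lo_ne_hi (v w : Fin n) : lo v ≠ hi w := by
  simp only [lo, hi, Ne, Fin.mk.injEq]; have := v.isLt; omega
lemma fiber_eq (x : Fin (2 * n)) (v : Fin n) (h : pr hn x = v) : x = lo v ∨ x = hi v := by
  have hx := x.isLt
  have hv : (x : ℕ) % n = v := congrArg Fin.val h
  rcases lt_or_ge (x : ℕ) n with h1 | h1
  · left; apply Fin.ext; simp only [lo]; rw [Nat.mod_eq_of_lt h1] at hv; exact hv.symm ▸ rfl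
  · right; apply Fin.ext; simp only [hi]
    have : (x : ℕ) % n = (x : ℕ) - n := by
      rw [Nat.mod_eq_sub_mod h1, Nat.mod_eq_of_lt (by omega)]
    omega

variable (S : Finset (Fin (2 * n)))

/-- section: pick a preimage in `S` for each vertex in the image. -/
def sec (v : Fin n) : Fin (2 * n) := if lo v ∈ S then lo v else hi v

lemma sec_mem {v : Fin n} (hv : v ∈ S.image (pr hn)) : sec S v ∈ S := by
  obtain ⟨x, hxS, hx⟩ := mem_image.1 hv
  rcases fiber_eq hn x v hx with rfl | rfl
  · simp [sec, hxS]
  · unfold sec; split <;> simpa [*]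

lemma pr_sec (v : Fin n) : pr hn (sec S v) = v := by
  unfold sec; split
  · exact pr_lo hn v
  · exact pr_hi hn v

/-- the set of twin pairs entirely inside `S` -/
def pairs : Finset (Fin n) := (S.image (pr hn)).filter (fun v => lo v ∈ S ∧ hi v ∈ S)

lemma pairs_card : (S.image (pr hn)).card + (pairs hn S).card = S.card := by
  have hsum := card_eq_sum_card_image (pr hn) S
  have hfib : ∀ v ∈ S.image (pr hn),
      (S.filter (fun x => pr hn x = v)).card = if v ∈ pairs hn S then 2 else 1 := by
    intro v hv
    have hsub : S.filter (fun x => pr hn x = v) ⊆ {lo v, hi v} := by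
      intro x hx
      obtain ⟨hxS, hxv⟩ := mem_filter.1 hx
      rcases fiber_eq hn x v hxv with rfl | rfl <;> simp
    by_cases hP : v ∈ pairs hn S
    · obtain ⟨-, hloS, hhiS⟩ := mem_filter.1 hP
      have : S.filter (fun x => pr hn x = v) = {lo v, hi v} := by
        apply Subset.antisymm hsub
        intro x hx
        rcases mem_insert.1 hx with rfl | hx
        · exact mem_filter.2 ⟨hloS, pr_lo hn v⟩
        · rw [mem_singleton.1 hx]; exact mem_filter.2 ⟨hhiS, pr_hi hn v⟩
      rw [this, if_pos hP, card_pair (lo_ne_hi v v)]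
    · rw [if_neg hP]
      obtain ⟨x, hxS, hxv⟩ := mem_image.1 hv
      have hne : (S.filter (fun x => pr hn x = v)).Nonempty := ⟨x, mem_filter.2 ⟨hxS, hxv⟩⟩
      have hnot : ¬ (lo v ∈ S ∧ hi v ∈ S) := by
        intro hc; exact hP (mem_filter.2 ⟨hv, hc⟩)
      have hle : (S.filter (fun x => pr hn x = v)).card ≤ 1 := by
        apply card_le_one.2
        intro a ha b hb
        obtain ⟨haS, hav⟩ := mem_filter.1 ha
        obtain ⟨hbS, hbv⟩ := mem_filter.1 hb
        rcases fiber_eq hn a v hav with rfl | rfl <;>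
          rcases fiber_eq hn b v hbv with rfl | rfl <;>
          first
            | rfl
            | (exact absurd ⟨by assumption, by assumption⟩ hnot)
            | (exact absurd (lo_ne_hi v v rfl) (by simp))
      have := card_pos.2 hne
      omega
  rw [sum_congr rfl hfib] at hsum
  have hsplit : ∀ v : Fin n, (if v ∈ pairs hn S then 2 else 1)
      = 1 + (if v ∈ pairs hn S then 1 else 0) := by intro v; split <;> rfl
  simp only [hsplit] at hsum
  rw [sum_add_distrib, sum_const, sum_ite_mem] at hsum
  have hPsub : pairs hn S ⊆ S.image (pr hn) := filter_subset _ _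
  rw [inter_eq_right.2 hPsub, sum_const] at hsum
  simp only [smul_eq_mul, mul_one] at hsum
  omega

lemma card_le_two_image : S.card ≤ 2 * (S.image (pr hn)).card := by
  have h1 := pairs_card hn S
  have : (pairs hn S).card ≤ (S.image (pr hn)).card := card_le_card (filter_subset _ _)
  omega

/-- Lift an injective set from the quotient. -/
lemma lift_set (e' : Finset (Fin n)) (he' : e' ⊆ S.image (pr hn)) :
    ∃ e ⊆ S, e.card = e'.card ∧ e.image (pr hn) = e' := by
  refine ⟨e'.image (sec S), ?_, ?_, ?_⟩
  · intro x hx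
    obtain ⟨v, hv, rfl⟩ := mem_image.1 hx
    exact sec_mem hn S (he' hv)
  · apply card_image_of_injOn
    intro a _ b _ hab
    have := congrArg (pr hn) hab
    rwa [pr_sec, pr_sec] at this
  · rw [image_image]
    apply Subset.antisymm
    · intro v hv
      obtain ⟨w, hw, rfl⟩ := mem_image.1 hv
      simpa [Function.comp, pr_sec] using hw
    · intro v hv
      exact mem_image.2 ⟨v, hv, by simp [Function.comp, pr_sec]⟩

/-- Build a `k`-set inside `S` whose image has exactly `k - t` elements. -/
lemma build_set (k t : ℕ) (ht1 : 1 ≤ t) (htk : 2 * t ≤ k)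
    (htP : t ≤ (pairs hn S).card) (hkc : k ≤ (S.image (pr hn)).card + t) :
    ∃ e ⊆ S, e.card = k ∧ (e.image (pr hn)).card = k - t := by
  obtain ⟨T, hTP, hTcard⟩ := exists_subset_card_eq htP
  have hTimg : T ⊆ S.image (pr hn) := hTP.trans (filter_subset _ _)
  have hUcard : k - 2 * t ≤ (S.image (pr hn) \ T).card := by
    rw [card_sdiff_of_subset hTimg, hTcard]
    have := card_le_card hTimg
    omega
  obtain ⟨U, hUsub, hUcard⟩ := exists_subset_card_eq hUcard
  have hUimg : U ⊆ S.image (pr hn) := hUsub.trans (sdiff_subset)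
  refine ⟨(T.image lo ∪ T.image hi) ∪ U.image (sec S), ?_, ?_, ?_⟩
  · intro x hx
    rcases mem_union.1 hx with hx | hx
    · rcases mem_union.1 hx with hx | hx <;>
        · obtain ⟨v, hv, rfl⟩ := mem_image.1 hx
          obtain ⟨-, h1, h2⟩ := mem_filter.1 (hTP hv)
          assumption
    · obtain ⟨v, hv, rfl⟩ := mem_image.1 hx
      exact sec_mem hn S (hUimg hv)
  · -- cardinality k
    have hd1 : Disjoint (T.image lo) (T.image hi) := by
      rw [disjoint_left]
      rintro a ha hb
      obtain ⟨v, -, rfl⟩ := mem_image.1 ha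
      obtain ⟨w, -, hw⟩ := mem_image.1 hb
      exact lo_ne_hi v w hw.symm
    have hd2 : Disjoint (T.image lo ∪ T.image hi) (U.image (sec S)) := by
      rw [disjoint_left]
      rintro a ha hb
      obtain ⟨v, hv, rfl⟩ := mem_image.1 hb
      have hvT : v ∉ T := (mem_sdiff.1 (hUsub hv)).2
      rcases mem_union.1 ha with ha | ha
      · obtain ⟨w, hw, hweq⟩ := mem_image.1 ha
        have := congrArg (pr hn) hweq
        rw [pr_lo, pr_sec] at this
        exact hvT (this ▸ hw)
      · obtain ⟨w, hw, hweq⟩ := mem_image.1 ha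
        have := congrArg (pr hn) hweq
        rw [pr_hi, pr_sec] at this
        exact hvT (this ▸ hw)
    rw [card_union_of_disjoint hd2, card_union_of_disjoint hd1]
    have c1 : (T.image lo).card = T.card := by
      apply card_image_of_injOn
      intro a _ b _ hab
      have := congrArg (pr hn) hab
      rwa [pr_lo, pr_lo] at this
    have c2 : (T.image hi).card = T.card := by
      apply card_image_of_injOn
      intro a _ b _ hab
      have := congrArg (pr hn) hab
      rwa [pr_hi, pr_hi] at this
    have c3 : (U.image (sec S)).card = U.card := by
      apply card_image_of_injOn
      intro a _ b _ hab
      have := congrArg (pr hn) hab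
      rwa [pr_sec, pr_sec] at this
    rw [c1, c2, c3, hTcard, hUcard]
    omega
  · -- image card k - t
    have himg : ((T.image lo ∪ T.image hi) ∪ U.image (sec S)).image (pr hn) = T ∪ U := by
      rw [image_union, image_union, image_image, image_image, image_image]
      have e1 : T.image (pr hn ∘ lo) = T := by
        apply Subset.antisymm
        · intro v hv; obtain ⟨w, hw, rfl⟩ := mem_image.1 hv
          simpa [Function.comp, pr_lo] using hw
        · intro v hv; exact mem_image.2 ⟨v, hv, by simp [Function.comp, pr_lo]⟩
      have e2 : T.image (pr hn ∘ hi) = T := by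
        apply Subset.antisymm
        · intro v hv; obtain ⟨w, hw, rfl⟩ := mem_image.1 hv
          simpa [Function.comp, pr_hi] using hw
        · intro v hv; exact mem_image.2 ⟨v, hv, by simp [Function.comp, pr_hi]⟩
      have e3 : U.image (pr hn ∘ sec S) = U := by
        apply Subset.antisymm
        · intro v hv; obtain ⟨w, hw, rfl⟩ := mem_image.1 hv
          simpa [Function.comp, pr_sec] using hw
        · intro v hv; exact mem_image.2 ⟨v, hv, by simp [Function.comp, pr_sec]⟩
      rw [e1, e2, e3, union_self]
    rw [himg, card_union_of_disjoint ?_, hTcard, hUcard]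
    · omega
    · rw [disjoint_left]
      intro a ha hb
      exact (mem_sdiff.1 (hUsub hb)).2 ha

end Aux

theorem stmt_4 (k p q n : ℕ) (hk : 4 ≤ k) (hke : Even k)
    (hp : k + 2 ≤ p) (hq : k + 1 ≤ q) (hn : 1 ≤ n)
    (h : ∃ χ : Finset (Fin n) → Bool, IsColoring (p - 1) q k n χ) :
    ∃ χ' : Finset (Fin (2 * n)) → Bool, IsColoring p q k (2 * n) χ' := by
  obtain ⟨χ, hχblue, hχred⟩ := h
  have hn' : 0 < n := hn
  have hkmod : k % 2 = 0 := Nat.even_iff.1 hke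
  refine ⟨fun e => if (e.image (pr hn')).card = e.card then χ (e.image (pr hn'))
      else decide (Odd (e.card - (e.image (pr hn')).card)), ?_, ?_⟩
  · -- blue side: every p-set contains a blue k-set
    intro S hS
    have hc2 : S.card ≤ 2 * (S.image (pr hn')).card := card_le_two_image hn' S
    have hcle : (S.image (pr hn')).card ≤ S.card := card_image_le
    have hPc : (S.image (pr hn')).card + (pairs hn' S).card = S.card := pairs_card hn' S
    by_cases hcase : p - 1 ≤ (S.image (pr hn')).card
    · obtain ⟨T', hT'sub, hT'card⟩ := exists_subset_card_eq hcase
      obtain ⟨e', he'T, he'k, hblue⟩ := hχblue T' hT'card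
      obtain ⟨e, heS, hecard, heimg⟩ := lift_set hn' S e' (he'T.trans hT'sub)
      refine ⟨e, heS, by rw [hecard, he'k], ?_⟩
      simp only [heimg, hecard]
      rw [if_pos trivial]
      exact hblue
    · obtain ⟨t, ht1, hteven, htk, htm, hkc⟩ :
          ∃ t, 1 ≤ t ∧ t % 2 = 0 ∧ 2 * t ≤ k ∧ t ≤ (pairs hn' S).card ∧
            k ≤ (S.image (pr hn')).card + t := by
        rcases le_or_gt (k - (S.image (pr hn')).card) 2 with h' | h'
        · exact ⟨2, by omega, by omega, by omega, by omega, by omega⟩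
        · rcases Nat.even_or_odd (k - (S.image (pr hn')).card) with he | ho
          · have := Nat.even_iff.1 he
            exact ⟨k - (S.image (pr hn')).card, by omega, by omega, by omega, by omega,
              by omega⟩
          · have := Nat.odd_iff.1 ho
            exact ⟨k - (S.image (pr hn')).card + 1, by omega, by omega, by omega, by omega,
              by omega⟩
      obtain ⟨e, heS, hecard, himgcard⟩ := build_set hn' S k t ht1 htk htm hkc
      refine ⟨e, heS, hecard, ?_⟩
      simp only [himgcard, hecard]
      rw [if_neg (by omega)]
      have h2 : k - (k - t) = t := by omega
      rw [h2]
      simp only [decide_eq_false_iff_not, Nat.odd_iff]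
      omega
  · -- red side: every q-set contains a red k-set
    intro S hS
    have hc2 : S.card ≤ 2 * (S.image (pr hn')).card := card_le_two_image hn' S
    have hcle : (S.image (pr hn')).card ≤ S.card := card_image_le
    have hPc : (S.image (pr hn')).card + (pairs hn' S).card = S.card := pairs_card hn' S
    by_cases hcase : (S.image (pr hn')).card = q
    · obtain ⟨e', he'T, he'k, hred⟩ := hχred (S.image (pr hn')) hcase
      obtain ⟨e, heS, hecard, heimg⟩ := lift_set hn' S e' he'T
      refine ⟨e, heS, by rw [hecard, he'k], ?_⟩
      simp only [heimg, hecard]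
      rw [if_pos trivial]
      exact hred
    · obtain ⟨t, ht1, htodd, htk, htm, hkc⟩ :
          ∃ t, 1 ≤ t ∧ t % 2 = 1 ∧ 2 * t ≤ k ∧ t ≤ (pairs hn' S).card ∧
            k ≤ (S.image (pr hn')).card + t := by
        rcases le_or_gt (k - (S.image (pr hn')).card) 1 with h' | h'
        · exact ⟨1, by omega, by omega, by omega, by omega, by omega⟩
        · rcases Nat.even_or_odd (k - (S.image (pr hn')).card) with he | ho
          · have := Nat.even_iff.1 he
            exact ⟨k - (S.image (pr hn')).card + 1, by omega, by omega, by omega, by omega,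
              by omega⟩
          · have := Nat.odd_iff.1 ho
            exact ⟨k - (S.image (pr hn')).card, by omega, by omega, by omega, by omega,
              by omega⟩
      obtain ⟨e, heS, hecard, himgcard⟩ := build_set hn' S k t ht1 htk htm hkc
      refine ⟨e, heS, hecard, ?_⟩
      simp only [himgcard, hecard]
      rw [if_neg (by omega)]
      have h2 : k - (k - t) = t := by omega
      rw [h2]
      simp only [decide_eq_true_eq, Nat.odd_iff]
      omega
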